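/- (Correctness of the sparsity-exploiting Monte Carlo estimator: absorbing the linear factor into the hypergeometric distribution.) For natural numbers N, a, b with 1 ≤ a ≤ N and 1 ≤ b ≤ N, one has, as an identity of real numbers, Σ_{n = max(1, a+b−N)}^{min(a,b)} (n/N) · log(N·n/(a·b)) · P{n | a, b, N} = (a·b/N²) · Σ_{m = max(0, a+b−N−1)}^{min(a,b)−1} log((m+1)·N/(a·b)) · P{m | a−1, b−1, N−1}, where P denotes the hypergeometric probability mass function and log the natural logarithm. (Hence drawing m from the hypergeometric distribution with parameters a−1, b−1, N−1 and returning (a·b/N²)·log((m+1)·N/(a·b)) yields an unbiased estimator of the per-cell contribution to the expected mutual information.) -/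

import Mathlib

/-- The hypergeometric probability mass function `P{n | a, b, N}`, as a real number.
Outside the support `max(0, a+b−N) ≤ n ≤ min(a,b)` both binomial coefficients vanish,
so this formula is the pmf everywhere. -/
noncomputable def hypergeomPmf (N a b n : ℕ) : ℝ :=
  ((b.choose n : ℝ) * ((N - b).choose (a - n) : ℝ)) / (N.choose a : ℝ)

lemma hypergeom_key (N a b n : ℕ) (ha1 : 1 ≤ a) (haN : a ≤ N) (hb1 : 1 ≤ b)
    (hn1 : 1 ≤ n) (hna : n ≤ a) :
    ((n : ℝ) / (N : ℝ)) * hypergeomPmf N a b n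
      = ((a : ℝ) * (b : ℝ) / (N : ℝ) ^ 2) * hypergeomPmf (N - 1) (a - 1) (b - 1) (n - 1) := by
  unfold hypergeomPmf
  have e1 : N - 1 - (b - 1) = N - b := by omega
  have e2 : a - 1 - (n - 1) = a - n := by omega
  rw [e1, e2]
  have hN1 : 1 ≤ N := le_trans ha1 haN
  have h1 : (b : ℝ) * ((b - 1).choose (n - 1) : ℝ) = (b.choose n : ℝ) * (n : ℝ) := by
    have := Nat.add_one_mul_choose_eq (b - 1) (n - 1)
    have hb : b - 1 + 1 = b := by omega
    have hn : n - 1 + 1 = n := by omega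
    rw [hb, hn] at this
    exact_mod_cast congrArg (Nat.cast : ℕ → ℝ) this
  have h2 : (N : ℝ) * ((N - 1).choose (a - 1) : ℝ) = (N.choose a : ℝ) * (a : ℝ) := by
    have := Nat.add_one_mul_choose_eq (N - 1) (a - 1)
    have hN : N - 1 + 1 = N := by omega
    have ha : a - 1 + 1 = a := by omega
    rw [hN, ha] at this
    exact_mod_cast congrArg (Nat.cast : ℕ → ℝ) this
  have hNne : (N : ℝ) ≠ 0 := by positivity
  have hCN : (N.choose a : ℝ) ≠ 0 := by
    exact Nat.cast_ne_zero.mpr (Nat.choose_pos haN).ne'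
  have hCN1 : ((N - 1).choose (a - 1) : ℝ) ≠ 0 := by
    have : a - 1 ≤ N - 1 := by omega
    exact Nat.cast_ne_zero.mpr (Nat.choose_pos this).ne'
  rw [div_mul_div_comm, div_mul_div_comm, div_eq_div_iff (mul_ne_zero hNne hCN) (mul_ne_zero (pow_ne_zero 2 hNne) hCN1)]
  linear_combination ((n:ℝ) * (b.choose n : ℝ) * (((N - b).choose (a - n)) : ℝ) * (N:ℝ)) * h2
    - ((a:ℝ) * (((N - b).choose (a - n)) : ℝ) * (N:ℝ) * (N.choose a : ℝ)) * h1

theorem emi_cell_absorb_linear_term (N a b : ℕ)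
    (ha1 : 1 ≤ a) (haN : a ≤ N) (hb1 : 1 ≤ b) (hbN : b ≤ N) :
    ∑ n ∈ Finset.Icc (max 1 (a + b - N)) (min a b),
        ((n : ℝ) / (N : ℝ)) * Real.log ((N : ℝ) * (n : ℝ) / ((a : ℝ) * (b : ℝ))) *
          hypergeomPmf N a b n
      = ((a : ℝ) * (b : ℝ) / (N : ℝ) ^ 2) *
          ∑ m ∈ Finset.Icc (max 0 (a + b - N - 1)) (min a b - 1),
            Real.log (((m : ℝ) + 1) * (N : ℝ) / ((a : ℝ) * (b : ℝ))) *
              hypergeomPmf (N - 1) (a - 1) (b - 1) m := by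
  rw [Finset.mul_sum]
  refine Finset.sum_nbij' (i := fun n => n - 1) (j := fun m => m + 1) ?_ ?_ ?_ ?_ ?_
  · intro n hn
    simp only [Finset.mem_Icc] at *
    omega
  · intro m hm
    simp only [Finset.mem_Icc] at *
    omega
  · intro n hn
    simp only [Finset.mem_Icc] at hn
    omega
  · intro m hm
    omega
  · intro n hn
    simp only [Finset.mem_Icc] at hn
    have hn1 : 1 ≤ n := le_trans (le_max_left _ _) hn.1
    have hna : n ≤ a := le_trans hn.2 (min_le_left _ _)
    have hcast : ((n - 1 : ℕ) : ℝ) + 1 = (n : ℝ) := by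
      have : ((n - 1 : ℕ) : ℝ) = (n : ℝ) - 1 := by
        push_cast [hn1]; ring
      rw [this]; ring
    simp only [hcast, mul_comm ((n : ℝ)) ((N : ℝ))]
    linear_combination Real.log ((N : ℝ) * (n : ℝ) / ((a : ℝ) * (b : ℝ))) *
      hypergeom_key N a b n ha1 haN hb1 hn1 hna
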